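/- arXiv:1506.07918 — 6 statements merged into one kernel-verified Lean document; each statement's English description precedes it below -/
import Mathlib

section
/- Let U ⊆ ℂ be a nonempty open set, u : U → ℂ holomorphic, and Ψ : U → M₂(ℂ) a holomorphic matrix-valued function, invertible at every point, satisfying Ψ'(z) = (σ₊ + u(z)·σ₋)·Ψ(z) on U. Then the matrix-valued function Λ₃(z) = Ψ(z)⁻¹·σ₃·Ψ(z) equals the negative of the derivative of Λ₋(z) = Ψ(z)⁻¹·σ₋·Ψ(z); that is, Λ₃(z) = −Λ₋'(z) for every z ∈ U. -/
open Matrix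

noncomputable def sigmaPlus : Matrix (Fin 2) (Fin 2) ℂ := !![0, 1; 0, 0]
noncomputable def sigmaMinus : Matrix (Fin 2) (Fin 2) ℂ := !![0, 0; 1, 0]
noncomputable def sigma3 : Matrix (Fin 2) (Fin 2) ℂ := !![1, 0; 0, -1]

/-- Entrywise derivative of a matrix-valued function of a complex variable. -/
noncomputable def mderiv (F : ℂ → Matrix (Fin 2) (Fin 2) ℂ) (z : ℂ) :
    Matrix (Fin 2) (Fin 2) ℂ :=
  Matrix.of fun i j => deriv (fun w => F w i j) z

/-- If `Ψ' = (σ₊ + u σ₋) Ψ` on a nonempty open set `U`, with `Ψ` holomorphic and invertible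
at every point of `U`, then `Λ₃ = Ψ⁻¹ σ₃ Ψ` equals minus the derivative of
`Λ₋ = Ψ⁻¹ σ₋ Ψ` on `U`. -/
theorem lambda3_eq_neg_deriv_lambdaMinus
    (U : Set ℂ) (hU : IsOpen U) (hne : U.Nonempty)
    (u : ℂ → ℂ) (hu : DifferentiableOn ℂ u U)
    (Ψ : ℂ → Matrix (Fin 2) (Fin 2) ℂ)
    (hΨ : ∀ i j, DifferentiableOn ℂ (fun w => Ψ w i j) U)
    (hinv : ∀ z ∈ U, IsUnit (Ψ z).det)
    (hODE : ∀ z ∈ U, mderiv Ψ z = (sigmaPlus + u z • sigmaMinus) * Ψ z) :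
    ∀ z ∈ U, (Ψ z)⁻¹ * sigma3 * Ψ z
      = - mderiv (fun w => (Ψ w)⁻¹ * sigmaMinus * Ψ w) z := by
  intro z hz
  have hmem : U ∈ nhds z := hU.mem_nhds hz
  -- differentiability of entries at z
  have hDa : DifferentiableAt ℂ (fun w => Ψ w 0 0) z := (hΨ 0 0).differentiableAt hmem
  have hDb : DifferentiableAt ℂ (fun w => Ψ w 0 1) z := (hΨ 0 1).differentiableAt hmem
  have hDc : DifferentiableAt ℂ (fun w => Ψ w 1 0) z := (hΨ 1 0).differentiableAt hmem
  have hDd : DifferentiableAt ℂ (fun w => Ψ w 1 1) z := (hΨ 1 1).differentiableAt hmem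
  -- derivative values at z from the ODE
  have hODEz := hODE z hz
  have hda : deriv (fun w => Ψ w 0 0) z = Ψ z 1 0 := by
    have h := congrFun (congrFun hODEz 0) 0
    simpa [mderiv, sigmaPlus, sigmaMinus, Matrix.mul_apply, Matrix.add_apply,
      Matrix.smul_apply, Fin.sum_univ_two] using h
  have hdb : deriv (fun w => Ψ w 0 1) z = Ψ z 1 1 := by
    have h := congrFun (congrFun hODEz 0) 1
    simpa [mderiv, sigmaPlus, sigmaMinus, Matrix.mul_apply, Matrix.add_apply,
      Matrix.smul_apply, Fin.sum_univ_two] using h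
  have hdc : deriv (fun w => Ψ w 1 0) z = u z * Ψ z 0 0 := by
    have h := congrFun (congrFun hODEz 1) 0
    simpa [mderiv, sigmaPlus, sigmaMinus, Matrix.mul_apply, Matrix.add_apply,
      Matrix.smul_apply, Fin.sum_univ_two] using h
  have hdd : deriv (fun w => Ψ w 1 1) z = u z * Ψ z 0 1 := by
    have h := congrFun (congrFun hODEz 1) 1
    simpa [mderiv, sigmaPlus, sigmaMinus, Matrix.mul_apply, Matrix.add_apply,
      Matrix.smul_apply, Fin.sum_univ_two] using h
  -- the determinant
  have hdet_ne : det (Ψ z) ≠ 0 := (hinv z hz).ne_zero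
  have hdetfun : (fun w => det (Ψ w))
      = fun w => Ψ w 0 0 * Ψ w 1 1 - Ψ w 0 1 * Ψ w 1 0 :=
    funext fun w => Matrix.det_fin_two _
  have hDdet : DifferentiableAt ℂ (fun w => det (Ψ w)) z := by
    rw [hdetfun]; exact (hDa.mul hDd).sub (hDb.mul hDc)
  have hdet' : deriv (fun w => det (Ψ w)) z = 0 := by
    rw [hdetfun, deriv_fun_sub (hDa.fun_mul hDd) (hDb.fun_mul hDc), deriv_fun_mul hDa hDd,
      deriv_fun_mul hDb hDc, hda, hdb, hdc, hdd]
    ring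
  -- quotient-rule helper (det' = 0)
  have hquot : ∀ N : ℂ → ℂ, DifferentiableAt ℂ N z →
      deriv (fun w => (det (Ψ w))⁻¹ * N w) z = (det (Ψ z))⁻¹ * deriv N z := by
    intro N hN
    rw [deriv_fun_mul (hDdet.fun_inv hdet_ne) hN, deriv_fun_inv'' hDdet hdet_ne, hdet']
    simp
  -- entrywise formulas for Λ₋
  have e00 : (fun w => ((Ψ w)⁻¹ * sigmaMinus * Ψ w) 0 0)
      = fun w => (det (Ψ w))⁻¹ * (-(Ψ w 0 0 * Ψ w 0 1)) := by
    funext w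
    rw [Matrix.inv_def, Matrix.adjugate_fin_two, Ring.inverse_eq_inv]
    simp [Matrix.mul_apply, Fin.sum_univ_two, sigmaMinus]
    ring
  have e01 : (fun w => ((Ψ w)⁻¹ * sigmaMinus * Ψ w) 0 1)
      = fun w => (det (Ψ w))⁻¹ * (-(Ψ w 0 1 * Ψ w 0 1)) := by
    funext w
    rw [Matrix.inv_def, Matrix.adjugate_fin_two, Ring.inverse_eq_inv]
    simp [Matrix.mul_apply, Fin.sum_univ_two, sigmaMinus]
    ring
  have e10 : (fun w => ((Ψ w)⁻¹ * sigmaMinus * Ψ w) 1 0)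
      = fun w => (det (Ψ w))⁻¹ * (Ψ w 0 0 * Ψ w 0 0) := by
    funext w
    rw [Matrix.inv_def, Matrix.adjugate_fin_two, Ring.inverse_eq_inv]
    simp [Matrix.mul_apply, Fin.sum_univ_two, sigmaMinus]
    ring
  have e11 : (fun w => ((Ψ w)⁻¹ * sigmaMinus * Ψ w) 1 1)
      = fun w => (det (Ψ w))⁻¹ * (Ψ w 0 0 * Ψ w 0 1) := by
    funext w
    rw [Matrix.inv_def, Matrix.adjugate_fin_two, Ring.inverse_eq_inv]
    simp [Matrix.mul_apply, Fin.sum_univ_two, sigmaMinus]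
    ring
  -- entry equalities
  have g00 : ((Ψ z)⁻¹ * sigma3 * Ψ z) 0 0
      = -(deriv (fun w => ((Ψ w)⁻¹ * sigmaMinus * Ψ w) 0 0) z) := by
    rw [e00, hquot _ ((hDa.fun_mul hDb).fun_neg), deriv.fun_neg, deriv_fun_mul hDa hDb, hda, hdb,
      Matrix.inv_def, Matrix.adjugate_fin_two, Ring.inverse_eq_inv]
    simp [Matrix.smul_mul, Matrix.smul_apply, Matrix.mul_apply, Fin.sum_univ_two, sigma3]
    ring
  have g01 : ((Ψ z)⁻¹ * sigma3 * Ψ z) 0 1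
      = -(deriv (fun w => ((Ψ w)⁻¹ * sigmaMinus * Ψ w) 0 1) z) := by
    rw [e01, hquot _ ((hDb.fun_mul hDb).fun_neg), deriv.fun_neg, deriv_fun_mul hDb hDb, hdb,
      Matrix.inv_def, Matrix.adjugate_fin_two, Ring.inverse_eq_inv]
    simp [Matrix.smul_mul, Matrix.smul_apply, Matrix.mul_apply, Fin.sum_univ_two, sigma3]
    ring
  have g10 : ((Ψ z)⁻¹ * sigma3 * Ψ z) 1 0
      = -(deriv (fun w => ((Ψ w)⁻¹ * sigmaMinus * Ψ w) 1 0) z) := by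
    rw [e10, hquot _ (hDa.fun_mul hDa), deriv_fun_mul hDa hDa, hda,
      Matrix.inv_def, Matrix.adjugate_fin_two, Ring.inverse_eq_inv]
    simp [Matrix.smul_mul, Matrix.smul_apply, Matrix.mul_apply, Fin.sum_univ_two, sigma3]
    ring
  have g11 : ((Ψ z)⁻¹ * sigma3 * Ψ z) 1 1
      = -(deriv (fun w => ((Ψ w)⁻¹ * sigmaMinus * Ψ w) 1 1) z) := by
    rw [e11, hquot _ (hDa.fun_mul hDb), deriv_fun_mul hDa hDb, hda, hdb,
      Matrix.inv_def, Matrix.adjugate_fin_two, Ring.inverse_eq_inv]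
    simp [Matrix.smul_mul, Matrix.smul_apply, Matrix.mul_apply, Fin.sum_univ_two, sigma3]
    ring
  ext i j
  fin_cases i <;> fin_cases j
  · simpa [mderiv] using g00
  · simpa [mderiv] using g01
  · simpa [mderiv] using g10
  · simpa [mderiv] using g11
end

section
/- Let U ⊆ ℂ be a nonempty open set, u : U → ℂ holomorphic, and Ψ : U → M₂(ℂ) a holomorphic matrix-valued function, invertible at every point, satisfying Ψ'(z) = (σ₊ + u(z)·σ₋)·Ψ(z) on U. Then the matrix-valued function Λ₊(z) = Ψ(z)⁻¹·σ₊·Ψ(z) satisfies Λ₊(z) = −(1/2)·Λ₋''(z) + u(z)·Λ₋(z) for every z ∈ U, where Λ₋(z) = Ψ(z)⁻¹·σ₋·Ψ(z). -/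
open Matrix

lemma mdiffAt_mul {F G : ℂ → Matrix (Fin 2) (Fin 2) ℂ} {z : ℂ}
    (hF : ∀ i j, DifferentiableAt ℂ (fun w => F w i j) z)
    (hG : ∀ i j, DifferentiableAt ℂ (fun w => G w i j) z) :
    ∀ i j, DifferentiableAt ℂ (fun w => (F w * G w) i j) z := by
  intro i j
  simp only [Matrix.mul_apply]
  exact DifferentiableAt.fun_sum fun k _ => (hF i k).mul (hG k j)

lemma mderiv_mul' (F G : ℂ → Matrix (Fin 2) (Fin 2) ℂ) (z : ℂ)
    (hF : ∀ i j, DifferentiableAt ℂ (fun w => F w i j) z)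
    (hG : ∀ i j, DifferentiableAt ℂ (fun w => G w i j) z) :
    mderiv (fun w => F w * G w) z = mderiv F z * G z + F z * mderiv G z := by
  ext i j
  simp only [mderiv, Matrix.of_apply, Matrix.add_apply, Matrix.mul_apply]
  rw [deriv_fun_sum (A := fun k w => F w i k * G w k j) (fun k _ => ((hF i k).mul (hG k j))), ← Finset.sum_add_distrib]
  exact Finset.sum_congr rfl fun k _ => deriv_fun_mul (hF i k) (hG k j)

lemma mderiv_neg (F : ℂ → Matrix (Fin 2) (Fin 2) ℂ) (z : ℂ) :
    mderiv (fun w => -(F w)) z = -mderiv F z := by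
  ext i j
  simp only [mderiv, Matrix.of_apply, Matrix.neg_apply]
  rw [← deriv.fun_neg]

lemma mderiv_congr {F G : ℂ → Matrix (Fin 2) (Fin 2) ℂ} {z : ℂ}
    (h : ∀ᶠ w in nhds z, F w = G w) : mderiv F z = mderiv G z := by
  ext i j
  simp only [mderiv, Matrix.of_apply]
  exact Filter.EventuallyEq.deriv_eq (h.mono fun w hw => by simp only []; rw [hw])

lemma comm1 (c : ℂ) :
    sigmaMinus * (sigmaPlus + c • sigmaMinus) - (sigmaPlus + c • sigmaMinus) * sigmaMinus
      = -sigma3 := by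
  ext i j
  fin_cases i <;> fin_cases j <;>
    simp [sigmaPlus, sigmaMinus, sigma3, Matrix.mul_apply, Fin.sum_univ_two]

lemma comm2 (c : ℂ) :
    (sigmaPlus + c • sigmaMinus) * sigma3 - sigma3 * (sigmaPlus + c • sigmaMinus)
      = (-2 : ℂ) • sigmaPlus + (2 * c) • sigmaMinus := by
  ext i j
  fin_cases i <;> fin_cases j <;>
    simp [sigmaPlus, sigmaMinus, sigma3, Matrix.mul_apply, Fin.sum_univ_two] <;> ring

/-- If `Ψ' = (σ₊ + u σ₋) Ψ` on a nonempty open set `U`, with `Ψ` holomorphic and invertible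
at every point of `U`, then `Λ₊ = Ψ⁻¹ σ₊ Ψ` satisfies
`Λ₊ = -(1/2) Λ₋'' + u Λ₋` on `U`, where `Λ₋ = Ψ⁻¹ σ₋ Ψ`. -/
theorem lambdaPlus_eq
    (U : Set ℂ) (hU : IsOpen U) (hne : U.Nonempty)
    (u : ℂ → ℂ) (hu : DifferentiableOn ℂ u U)
    (Ψ : ℂ → Matrix (Fin 2) (Fin 2) ℂ)
    (hΨ : ∀ i j, DifferentiableOn ℂ (fun w => Ψ w i j) U)
    (hinv : ∀ z ∈ U, IsUnit (Ψ z).det)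
    (hODE : ∀ z ∈ U, mderiv Ψ z = (sigmaPlus + u z • sigmaMinus) * Ψ z) :
    ∀ z ∈ U, (Ψ z)⁻¹ * sigmaPlus * Ψ z
      = (-(1/2) : ℂ) • mderiv (mderiv (fun w => (Ψ w)⁻¹ * sigmaMinus * Ψ w)) z
        + u z • ((Ψ z)⁻¹ * sigmaMinus * Ψ z) := by
  set Φ : ℂ → Matrix (Fin 2) (Fin 2) ℂ := fun w => (Ψ w)⁻¹ with hΦdef
  set A : ℂ → Matrix (Fin 2) (Fin 2) ℂ := fun w => sigmaPlus + u w • sigmaMinus with hAdef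
  -- differentiability of Ψ entries at points of U
  have hΨat : ∀ w ∈ U, ∀ i j, DifferentiableAt ℂ (fun v => Ψ v i j) w := fun w hw i j =>
    (hΨ i j).differentiableAt (hU.mem_nhds hw)
  -- differentiability of Φ entries
  have hdet : DifferentiableOn ℂ (fun w => (Ψ w).det) U := by
    have h : (fun w => (Ψ w).det) = fun w => Ψ w 0 0 * Ψ w 1 1 - Ψ w 0 1 * Ψ w 1 0 :=
      funext fun w => Matrix.det_fin_two _
    rw [h]
    exact ((hΨ 0 0).mul (hΨ 1 1)).sub ((hΨ 0 1).mul (hΨ 1 0))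
  have hadj : ∀ i j, DifferentiableOn ℂ (fun w => (Ψ w).adjugate i j) U := by
    intro i j
    have h : ∀ w, (Ψ w).adjugate = !![Ψ w 1 1, -(Ψ w 0 1); -(Ψ w 1 0), Ψ w 0 0] := fun w =>
      Matrix.adjugate_fin_two _
    fin_cases i <;> fin_cases j <;> simp only [h] <;> simp <;>
      first
        | exact hΨ 1 1
        | exact (hΨ 0 1).neg
        | exact (hΨ 1 0).neg
        | exact hΨ 0 0
        | exact hΨ 0 1
        | exact hΨ 1 0
  have hΦ : ∀ i j, DifferentiableOn ℂ (fun w => Φ w i j) U := by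
    intro i j
    have h : ∀ w, Φ w i j = ((Ψ w).det)⁻¹ * (Ψ w).adjugate i j := by
      intro w
      rw [hΦdef]
      simp [Matrix.inv_def, Ring.inverse_eq_inv]
    simp only [h]
    exact (hdet.inv fun w hw => (hinv w hw).ne_zero).mul (hadj i j)
  have hΦat : ∀ w ∈ U, ∀ i j, DifferentiableAt ℂ (fun v => Φ v i j) w := fun w hw i j =>
    (hΦ i j).differentiableAt (hU.mem_nhds hw)
  have hΦΨ : ∀ w ∈ U, Φ w * Ψ w = 1 := fun w hw => Matrix.nonsing_inv_mul _ (hinv w hw)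
  have hΨΦ : ∀ w ∈ U, Ψ w * Φ w = 1 := fun w hw => Matrix.mul_nonsing_inv _ (hinv w hw)
  -- derivative of Φ
  have hΦ' : ∀ w ∈ U, mderiv Φ w = -(Φ w * A w) := by
    intro w hw
    have h1 : mderiv (fun v => Φ v * Ψ v) w = mderiv Φ w * Ψ w + Φ w * mderiv Ψ w :=
      mderiv_mul' _ _ _ (hΦat w hw) (hΨat w hw)
    have h2 : mderiv (fun v => Φ v * Ψ v) w = 0 := by
      have he : ∀ᶠ v in nhds w, Φ v * Ψ v = (fun _ => (1 : Matrix (Fin 2) (Fin 2) ℂ)) v := by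
        filter_upwards [hU.mem_nhds hw] with v hv using hΦΨ v hv
      rw [mderiv_congr he]
      ext i j
      simp [mderiv]
    have h3 : mderiv Φ w * Ψ w = -(Φ w * (A w * Ψ w)) := by
      have h4 := h1.symm.trans h2
      rw [hODE w hw] at h4
      exact eq_neg_of_add_eq_zero_left h4
    calc mderiv Φ w = mderiv Φ w * (Ψ w * Φ w) := by rw [hΨΦ w hw, mul_one]
      _ = (mderiv Φ w * Ψ w) * Φ w := by rw [mul_assoc]
      _ = -(Φ w * (A w * Ψ w)) * Φ w := by rw [h3]
      _ = -(Φ w * A w * (Ψ w * Φ w)) := by noncomm_ring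
      _ = -(Φ w * A w) := by rw [hΨΦ w hw, mul_one]
  -- first derivative of Λ₋
  have hΛ' : ∀ w ∈ U, mderiv (fun v => Φ v * sigmaMinus * Ψ v) w = -(Φ w * sigma3 * Ψ w) := by
    intro w hw
    have hFat : ∀ i j, DifferentiableAt ℂ (fun v => (Φ v * sigmaMinus) i j) w :=
      mdiffAt_mul (hΦat w hw) fun i j => differentiableAt_const _
    have h1 : mderiv (fun v => Φ v * sigmaMinus * Ψ v) w
        = mderiv (fun v => Φ v * sigmaMinus) w * Ψ w + Φ w * sigmaMinus * mderiv Ψ w :=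
      mderiv_mul' _ _ _ hFat (hΨat w hw)
    have h2 : mderiv (fun v => Φ v * sigmaMinus) w = mderiv Φ w * sigmaMinus := by
      rw [mderiv_mul' (fun v => Φ v) (fun _ => sigmaMinus) w (hΦat w hw)
        (fun i j => differentiableAt_const _)]
      have : mderiv (fun _ => sigmaMinus) w = 0 := by ext i j; simp [mderiv]
      rw [this, mul_zero, add_zero]
    rw [h1, h2, hΦ' w hw, hODE w hw]
    have gen1 : ∀ B P Q : Matrix (Fin 2) (Fin 2) ℂ,
        sigmaMinus * B - B * sigmaMinus = -sigma3 →
        -(P * B) * sigmaMinus * Q + P * sigmaMinus * (B * Q) = -(P * sigma3 * Q) := by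
      intro B P Q hB
      have hB' : sigmaMinus * B = -sigma3 + B * sigmaMinus := sub_eq_iff_eq_add.mp hB
      calc -(P * B) * sigmaMinus * Q + P * sigmaMinus * (B * Q)
          = P * (sigmaMinus * B) * Q - P * (B * sigmaMinus) * Q := by noncomm_ring
        _ = P * (-sigma3 + B * sigmaMinus) * Q - P * (B * sigmaMinus) * Q := by rw [hB']
        _ = -(P * sigma3 * Q) := by noncomm_ring
    exact gen1 _ _ _ (comm1 (u w))
  -- now fix z and compute the second derivative
  intro z hz
  have hcong : ∀ᶠ v in nhds z,
      mderiv (fun w => Φ w * sigmaMinus * Ψ w) v = (fun w => -(Φ w * sigma3) * Ψ w) v := by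
    filter_upwards [hU.mem_nhds hz] with v hv
    rw [hΛ' v hv]
    simp [neg_mul, mul_assoc]
  have hFat : ∀ i j, DifferentiableAt ℂ (fun v => (-(Φ v * sigma3)) i j) z := by
    intro i j
    have := mdiffAt_mul (F := fun v => Φ v) (G := fun _ => sigma3) (hΦat z hz)
      (fun i j => differentiableAt_const _) i j
    simpa using this.neg
  have h2nd : mderiv (mderiv (fun w => Φ w * sigmaMinus * Ψ w)) z
      = Φ z * (A z * sigma3 - sigma3 * A z) * Ψ z := by
    rw [mderiv_congr hcong,
      mderiv_mul' _ _ _ hFat (hΨat z hz)]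
    have hn : mderiv (fun v => -(Φ v * sigma3)) z = -(mderiv Φ z * sigma3) := by
      rw [mderiv_neg]
      congr 1
      rw [mderiv_mul' (fun v => Φ v) (fun _ => sigma3) z (hΦat z hz)
        (fun i j => differentiableAt_const _)]
      have : mderiv (fun _ => sigma3) z = 0 := by ext i j; simp [mderiv]
      rw [this, mul_zero, add_zero]
    rw [hn, hΦ' z hz, hODE z hz]
    have gen2 : ∀ B P Q : Matrix (Fin 2) (Fin 2) ℂ,
        -(-(P * B) * sigma3) * Q + -(P * sigma3) * (B * Q)
          = P * (B * sigma3 - sigma3 * B) * Q := by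
      intro B P Q; noncomm_ring
    exact gen2 _ _ _
  rw [h2nd, comm2 (u z)]
  have expand : Φ z * ((-2 : ℂ) • sigmaPlus + (2 * u z) • sigmaMinus) * Ψ z
      = (-2 : ℂ) • (Φ z * sigmaPlus * Ψ z) + (2 * u z) • (Φ z * sigmaMinus * Ψ z) := by
    simp [Matrix.mul_add, Matrix.add_mul, Matrix.mul_smul, Matrix.smul_mul]
  rw [expand, smul_add, smul_smul, smul_smul]
  norm_num
  module
end

section
/- For all matrices M, N ∈ SL(2,ℂ), one has (1/2)·(tr(M·N) − tr(M·N⁻¹)) = tr(M·σ₊)·tr(N·σ₋) + tr(M·σ₋)·tr(N·σ₊) + (1/2)·tr(M·σ₃)·tr(N·σ₃). -/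
open Matrix

/-- For `M, N ∈ SL(2,ℂ)`,
`(1/2)(tr(MN) - tr(MN⁻¹)) = tr(Mσ₊) tr(Nσ₋) + tr(Mσ₋) tr(Nσ₊) + (1/2) tr(Mσ₃) tr(Nσ₃)`. -/
theorem goldman_trace_identity
    (M N : Matrix (Fin 2) (Fin 2) ℂ) (hM : M.det = 1) (hN : N.det = 1) :
    (1 / 2 : ℂ) * (Matrix.trace (M * N) - Matrix.trace (M * N⁻¹))
      = Matrix.trace (M * sigmaPlus) * Matrix.trace (N * sigmaMinus)
        + Matrix.trace (M * sigmaMinus) * Matrix.trace (N * sigmaPlus)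
        + (1 / 2 : ℂ) * Matrix.trace (M * sigma3) * Matrix.trace (N * sigma3) := by
  rw [Matrix.inv_def, hN]
  simp [sigmaPlus, sigmaMinus, sigma3, Matrix.trace_fin_two, Matrix.mul_apply,
    Matrix.adjugate_fin_two, Fin.sum_univ_two]
  ring
end

section
/- Let a ≤ b be real numbers and let u, λ, h : ℝ → ℂ be functions such that u is continuously differentiable, and λ and h are three times continuously differentiable, on an open interval containing [a,b]. Suppose λ satisfies the third-order equation λ'''(t) = 4·u(t)·λ'(t) + 2·u'(t)·λ(t) for all t ∈ [a,b]. Then ∫_a^b λ(t)·((1/2)·h'''(t) − 2·u(t)·h'(t) − u'(t)·h(t)) dt = (1/2)·[ λ(t)·h''(t) − λ'(t)·h'(t) + (λ''(t) − 4·u(t)·λ(t))·h(t) ]_{t=a}^{t=b}. -/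
open MeasureTheory intervalIntegral

/-- Integration by parts against the Lenard operator `L = (1/2)∂³ - 2u∂ - u'`:
if `l` satisfies the third-order equation `l''' = 4 u l' + 2 u' l` on `[a,b]`, then for any
sufficiently smooth `h`,
`∫_a^b l·((1/2)h''' - 2u h' - u' h) = (1/2)[l h'' - l' h' + (l'' - 4u l) h]_a^b`. -/
theorem lenard_integration_by_parts
    (a b c d : ℝ) (hab : a ≤ b) (hca : c < a) (hbd : b < d)
    (u l h : ℝ → ℂ)
    (hu : ContDiffOn ℝ 1 u (Set.Ioo c d))
    (hl : ContDiffOn ℝ 3 l (Set.Ioo c d))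
    (hh : ContDiffOn ℝ 3 h (Set.Ioo c d))
    (hode : ∀ t ∈ Set.Icc a b,
      deriv (deriv (deriv l)) t = 4 * u t * deriv l t + 2 * deriv u t * l t) :
    (∫ t in a..b,
        l t * ((1 / 2) * deriv (deriv (deriv h)) t - 2 * u t * deriv h t
          - deriv u t * h t))
      = (1 / 2) *
        ((l b * deriv (deriv h) b - deriv l b * deriv h b
            + (deriv (deriv l) b - 4 * u b * l b) * h b)
          - (l a * deriv (deriv h) a - deriv l a * deriv h a
            + (deriv (deriv l) a - 4 * u a * l a) * h a)) := by
  have hopen : IsOpen (Set.Ioo c d) := isOpen_Ioo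
  have hsub : Set.Icc a b ⊆ Set.Ioo c d := fun x hx =>
    ⟨lt_of_lt_of_le hca hx.1, lt_of_le_of_lt hx.2 hbd⟩
  -- derived smoothness facts
  have hl1 : ContDiffOn ℝ 2 (deriv l) (Set.Ioo c d) :=
    hl.deriv_of_isOpen hopen (by norm_num)
  have hl2 : ContDiffOn ℝ 1 (deriv (deriv l)) (Set.Ioo c d) :=
    hl1.deriv_of_isOpen hopen (by norm_num)
  have hh1 : ContDiffOn ℝ 2 (deriv h) (Set.Ioo c d) :=
    hh.deriv_of_isOpen hopen (by norm_num)
  have hh2 : ContDiffOn ℝ 1 (deriv (deriv h)) (Set.Ioo c d) :=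
    hh1.deriv_of_isOpen hopen (by norm_num)
  have hh3 : ContinuousOn (deriv (deriv (deriv h))) (Set.Ioo c d) :=
    hh2.continuousOn_deriv_of_isOpen hopen le_rfl
  have hu1 : ContinuousOn (deriv u) (Set.Ioo c d) :=
    hu.continuousOn_deriv_of_isOpen hopen le_rfl
  have hda : ∀ (f : ℝ → ℂ), DifferentiableOn ℝ f (Set.Ioo c d) →
      ∀ t ∈ Set.Icc a b, HasDerivAt f (deriv f t) t := by
    intro f hf t ht
    exact (hf.differentiableAt (hopen.mem_nhds (hsub ht))).hasDerivAt
  set F : ℝ → ℂ := fun t => (1 / 2) *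
    (l t * deriv (deriv h) t - deriv l t * deriv h t
      + (deriv (deriv l) t - 4 * u t * l t) * h t) with hF
  have key : ∫ t in a..b,
      l t * ((1 / 2) * deriv (deriv (deriv h)) t - 2 * u t * deriv h t
        - deriv u t * h t) = F b - F a := by
    apply integral_eq_sub_of_hasDerivAt
    · intro t ht
      rw [Set.uIcc_of_le hab] at ht
      have Hl0 : HasDerivAt l (deriv l t) t :=
        hda l (hl.differentiableOn (by norm_num)) t ht
      have Hl1 : HasDerivAt (deriv l) (deriv (deriv l) t) t :=
        hda _ (hl1.differentiableOn (by norm_num)) t ht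
      have Hl2 : HasDerivAt (deriv (deriv l)) (deriv (deriv (deriv l)) t) t :=
        hda _ (hl2.differentiableOn (by norm_num)) t ht
      have Hh0 : HasDerivAt h (deriv h t) t :=
        hda h (hh.differentiableOn (by norm_num)) t ht
      have Hh1 : HasDerivAt (deriv h) (deriv (deriv h) t) t :=
        hda _ (hh1.differentiableOn (by norm_num)) t ht
      have Hh2 : HasDerivAt (deriv (deriv h)) (deriv (deriv (deriv h)) t) t :=
        hda _ (hh2.differentiableOn (by norm_num)) t ht
      have Hu0 : HasDerivAt u (deriv u t) t :=
        hda u (hu.differentiableOn (by norm_num)) t ht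
      have H : HasDerivAt F
          ((1 / 2) *
            ((deriv l t * deriv (deriv h) t + l t * deriv (deriv (deriv h)) t)
              - (deriv (deriv l) t * deriv h t + deriv l t * deriv (deriv h) t)
              + ((deriv (deriv (deriv l)) t
                    - (4 * deriv u t * l t + 4 * u t * deriv l t)) * h t
                + (deriv (deriv l) t - 4 * u t * l t) * deriv h t))) t := by
        exact (((Hl0.mul Hh2).sub (Hl1.mul Hh1)).add
          ((Hl2.sub ((Hu0.const_mul (4 : ℂ)).mul Hl0)).mul Hh0)).const_mul (1 / 2)
      refine H.congr_deriv ?_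
      rw [hode t ht]
      ring
    · apply ContinuousOn.intervalIntegrable
      rw [Set.uIcc_of_le hab]
      apply ContinuousOn.mono _ hsub
      exact (hl.continuousOn).mul
        ((((hh3.const_smul ((1:ℂ)/2)).sub
            (((continuousOn_const.mul hu.continuousOn)).mul hh1.continuousOn)).sub
          (hu1.mul hh.continuousOn)))
  rw [key, hF]
  ring
end

section
/- Let n ≥ 1, let U ⊆ ℂⁿ × ℂⁿ be open with points written x = (A₁,…,A_n, B₁,…,B_n), and let Π : U → M_n(ℂ), with entries Π_{ij}, be continuously ℂ-differentiable. For a ℂ-differentiable function f : U → ℂ define V_i f = ∂f/∂A_i + Σ_{j=1}^n Π_{ij}·∂f/∂B_j. Suppose q₁,…,q_n : U → ℂ are twice continuously ℂ-differentiable functions such that V_i q_k = 0 on U for all i, k, and such that the n×n matrix (∂q_k/∂B_j)_{k,j} is invertible at every point of U. Then V_i Π_{jr} = V_j Π_{ir} on U for all indices i, j, r; equivalently, the vector fields V₁,…,V_n pairwise commute, and Π satisfies the system ∂Π_{kℓ}/∂A_j + Σ_r Π_{jr}·∂Π_{kℓ}/∂B_r = ∂Π_{jℓ}/∂A_k + Σ_r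 Π_{kr}·∂Π_{jℓ}/∂B_r. -/
/-- Partial derivative `∂f/∂A_i` of a function on `ℂⁿ × ℂⁿ`, points being written
`x = (A, B)`. -/
noncomputable def pA {n : ℕ} (f : (Fin n → ℂ) × (Fin n → ℂ) → ℂ) (i : Fin n)
    (x : (Fin n → ℂ) × (Fin n → ℂ)) : ℂ :=
  fderiv ℂ f x (Pi.single i 1, 0)

/-- Partial derivative `∂f/∂B_j` of a function on `ℂⁿ × ℂⁿ`, points being written
`x = (A, B)`. -/
noncomputable def pB {n : ℕ} (f : (Fin n → ℂ) × (Fin n → ℂ) → ℂ) (j : Fin n)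
    (x : (Fin n → ℂ) × (Fin n → ℂ)) : ℂ :=
  fderiv ℂ f x (0, Pi.single j 1)

/-- The vector field `V_i = ∂/∂A_i + Σ_j Π_{ij} ∂/∂B_j` applied to `f`. -/
noncomputable def Vop {n : ℕ} (P : (Fin n → ℂ) × (Fin n → ℂ) → Matrix (Fin n) (Fin n) ℂ)
    (i : Fin n) (f : (Fin n → ℂ) × (Fin n → ℂ) → ℂ)
    (x : (Fin n → ℂ) × (Fin n → ℂ)) : ℂ :=
  pA f i x + ∑ j, P x i j * pB f j x

/-- The function `y ↦ (fderiv f y) v` is differentiable at `x` when `f` is `C²` at `x`. -/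
private lemma diff_dir {n : ℕ} {f : (Fin n → ℂ) × (Fin n → ℂ) → ℂ}
    {x : (Fin n → ℂ) × (Fin n → ℂ)} (hf : ContDiffAt ℂ 2 f x)
    (v : (Fin n → ℂ) × (Fin n → ℂ)) :
    DifferentiableAt ℂ (fun y => fderiv ℂ f y v) x := by
  have hd : DifferentiableAt ℂ (fderiv ℂ f) x :=
    (hf.fderiv_right (m := 1) (by norm_num)).differentiableAt one_ne_zero
  exact hd.clm_apply (differentiableAt_const v)

/-- Derivative of a directional derivative, as a second derivative. -/
private lemma deriv_dir {n : ℕ} {f : (Fin n → ℂ) × (Fin n → ℂ) → ℂ}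
    {x : (Fin n → ℂ) × (Fin n → ℂ)} (hf : ContDiffAt ℂ 2 f x)
    (v w : (Fin n → ℂ) × (Fin n → ℂ)) :
    fderiv ℂ (fun y => fderiv ℂ f y v) x w = fderiv ℂ (fderiv ℂ f) x w v := by
  have hd : DifferentiableAt ℂ (fderiv ℂ f) x :=
    (hf.fderiv_right (m := 1) (by norm_num)).differentiableAt one_ne_zero
  rw [fderiv_clm_apply hd (differentiableAt_const v)]
  simp

/-- If the vector fields `V_i = ∂_{A_i} + Σ_j Π_{ij} ∂_{B_j}` annihilate functions
`q₁, …, q_n` whose matrix of `B`-partials is everywhere invertible, then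
`V_i Π_{jr} = V_j Π_{ir}`; equivalently the `V_i` pairwise commute and `Π` satisfies the
system of PDEs (5.10) of the paper. -/
theorem prym_matrix_system
    (n : ℕ) (hn : 1 ≤ n)
    (U : Set ((Fin n → ℂ) × (Fin n → ℂ))) (hU : IsOpen U)
    (P : (Fin n → ℂ) × (Fin n → ℂ) → Matrix (Fin n) (Fin n) ℂ)
    (hP : ∀ i j, ContDiffOn ℂ 1 (fun x => P x i j) U)
    (q : Fin n → (Fin n → ℂ) × (Fin n → ℂ) → ℂ)
    (hq : ∀ k, ContDiffOn ℂ 2 (q k) U)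
    (hVq : ∀ i k, ∀ x ∈ U, Vop P i (q k) x = 0)
    (hinv : ∀ x ∈ U,
      IsUnit (Matrix.of fun k j => pB (q k) j x : Matrix (Fin n) (Fin n) ℂ).det) :
    ∀ i j r, ∀ x ∈ U,
      Vop P i (fun y => P y j r) x = Vop P j (fun y => P y i r) x := by
  intro i j r x hx
  have hmem : U ∈ nhds x := hU.mem_nhds hx
  have hqx : ∀ k, ContDiffAt ℂ 2 (q k) x := fun k => (hq k).contDiffAt hmem
  have hPd : ∀ a b, DifferentiableAt ℂ (fun y => P y a b) x :=
    fun a b => ((hP a b).contDiffAt hmem).differentiableAt one_ne_zero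
  -- the direction of the vector field `V_a` at the point `x`
  set ω : Fin n → (Fin n → ℂ) × (Fin n → ℂ) :=
    fun a => ((Pi.single a 1, 0) : (Fin n → ℂ) × (Fin n → ℂ))
      + ∑ t, P x a t • (((0 : Fin n → ℂ), Pi.single t 1) : (Fin n → ℂ) × (Fin n → ℂ))
    with hω
  -- `V_a g (x)` is the derivative of `g` at `x` in direction `ω a`
  have L1 : ∀ (a : Fin n) (g : (Fin n → ℂ) × (Fin n → ℂ) → ℂ),
      Vop P a g x = fderiv ℂ g x (ω a) := by
    intro a g
    rw [hω]
    simp only [map_add, map_sum, map_smul, smul_eq_mul]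
    rfl
  -- derivative of `V_b f` at `x`
  have L2 : ∀ (b : Fin n) (f : (Fin n → ℂ) × (Fin n → ℂ) → ℂ), ContDiffAt ℂ 2 f x →
      ∀ v, fderiv ℂ (Vop P b f) x v =
        fderiv ℂ (fderiv ℂ f) x v (ω b)
          + ∑ s, fderiv ℂ (fun y => P y b s) x v * pB f s x := by
    intro b f hf v
    have hfd1 : DifferentiableAt ℂ
        (fun y => fderiv ℂ f y ((Pi.single b 1, 0) : (Fin n → ℂ) × (Fin n → ℂ))) x :=
      diff_dir hf _
    have hterm : ∀ s : Fin n, DifferentiableAt ℂ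
        (fun y => P y b s * fderiv ℂ f y ((0, Pi.single s 1) : (Fin n → ℂ) × (Fin n → ℂ))) x :=
      fun s => (hPd b s).mul (diff_dir hf _)
    have hsum : DifferentiableAt ℂ
        (fun y => ∑ s, P y b s *
          fderiv ℂ f y ((0, Pi.single s 1) : (Fin n → ℂ) × (Fin n → ℂ))) x :=
      DifferentiableAt.fun_sum (fun s _ => hterm s)
    have hVb : Vop P b f = fun y =>
        fderiv ℂ f y ((Pi.single b 1, 0) : (Fin n → ℂ) × (Fin n → ℂ))
          + ∑ s, P y b s * fderiv ℂ f y ((0, Pi.single s 1) : (Fin n → ℂ) × (Fin n → ℂ)) := rfl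
    rw [hVb, fderiv_fun_add hfd1 hsum, ContinuousLinearMap.add_apply,
      fderiv_fun_sum (fun s _ => hterm s)]
    simp only [ContinuousLinearMap.coe_sum', Finset.sum_apply]
    have hmul : ∀ s : Fin n,
        fderiv ℂ (fun y => P y b s *
          fderiv ℂ f y ((0, Pi.single s 1) : (Fin n → ℂ) × (Fin n → ℂ))) x v
        = fderiv ℂ (fun y => P y b s) x v * pB f s x
          + P x b s * fderiv ℂ (fderiv ℂ f) x v ((0, Pi.single s 1)) := by
      intro s
      rw [fderiv_fun_mul (hPd b s) (diff_dir hf _)]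
      simp only [ContinuousLinearMap.add_apply, ContinuousLinearMap.smul_apply, smul_eq_mul,
        deriv_dir hf]
      rw [pB]
      ring
    rw [Finset.sum_congr rfl (fun s _ => hmul s), deriv_dir hf, hω]
    simp only [map_add, map_sum, map_smul, smul_eq_mul, Finset.sum_add_distrib]
    ring
  -- the fundamental identity coming from `V_b q_k = 0`
  have key : ∀ (a b k : Fin n),
      fderiv ℂ (fderiv ℂ (q k)) x (ω a) (ω b)
        + ∑ s, Vop P a (fun y => P y b s) x * pB (q k) s x = 0 := by
    intro a b k
    have hzero : Vop P b (q k) =ᶠ[nhds x] (fun _ => 0) := by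
      filter_upwards [hmem] with y hy using hVq b k y hy
    have h0 : fderiv ℂ (Vop P b (q k)) x = 0 := by
      rw [hzero.fderiv_eq]; simp
    have h2 := L2 b (q k) (hqx k) (ω a)
    rw [h0] at h2
    simp only [ContinuousLinearMap.zero_apply] at h2
    have hL1 : ∀ s : Fin n, Vop P a (fun y => P y b s) x
        = fderiv ℂ (fun y => P y b s) x (ω a) := fun s => L1 a _
    rw [Finset.sum_congr rfl (fun s _ => by rw [hL1 s])]
    exact h2.symm
  -- symmetry of the second derivative
  have hsymm : ∀ k : Fin n, ∀ v w,
      fderiv ℂ (fderiv ℂ (q k)) x v w = fderiv ℂ (fderiv ℂ (q k)) x w v :=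
    fun k => (hqx k).isSymmSndFDerivAt (by simp)
  -- the linear system satisfied by the commutator coefficients
  have hlin : ∀ k : Fin n, ∑ s, (Vop P i (fun y => P y j s) x
      - Vop P j (fun y => P y i s) x) * pB (q k) s x = 0 := by
    intro k
    have h1 := key i j k
    have h2 := key j i k
    rw [hsymm k (ω j) (ω i)] at h2
    simp only [sub_mul, Finset.sum_sub_distrib]
    linear_combination h1 - h2
  set c : Fin n → ℂ :=
    fun s => Vop P i (fun y => P y j s) x - Vop P j (fun y => P y i s) x with hc
  have hM : (Matrix.of fun k s => pB (q k) s x : Matrix (Fin n) (Fin n) ℂ).mulVec c = 0 := by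
    funext k
    have := hlin k
    simpa [Matrix.mulVec, dotProduct, hc, mul_comm] using this
  have hinj : Function.Injective
      (Matrix.of fun k s => pB (q k) s x : Matrix (Fin n) (Fin n) ℂ).mulVec :=
    Matrix.mulVec_injective_iff_isUnit.2 ((Matrix.isUnit_iff_isUnit_det _).2 (hinv x hx))
  have hc0 : c = 0 := by
    apply hinj
    rw [hM, Matrix.mulVec_zero]
  have := congrFun hc0 r
  rw [hc] at this
  simpa [sub_eq_zero] using this
end

section
/- Let n ≥ 1, let U ⊆ ℂⁿ × ℂⁿ be open with points written x = (A₁,…,A_n, B₁,…,B_n), and let Π : U → M_n(ℂ), with entries Π_{ij}, be a symmetric-matrix-valued function satisfying B_j = Σ_{s=1}^n Π_{js}(x)·A_s at every point x = (A,B) ∈ U and for every j. For a ℂ-differentiable f : U → ℂ define V_i f = ∂f/∂A_i + Σ_{j=1}^n Π_{ij}·∂f/∂B_j, and let F : U → ℂ be the function F(A,B) = Σ_{s=1}^n A_s·B_s. Then the function V_j F is ℂ-differentiable on U and Π_{ij}(x) = (1/2)·V_i(V_j F)(x) for every x ∈ U and all i, j. -/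
/-- The generating function `F(A,B) = Σ_s A_s B_s`. -/
noncomputable def genF {n : ℕ} (x : (Fin n → ℂ) × (Fin n → ℂ)) : ℂ :=
  ∑ s, x.1 s * x.2 s

open ContinuousLinearMap in
/-- The derivative of `genF`. -/
noncomputable def genFderiv {n : ℕ} (x : (Fin n → ℂ) × (Fin n → ℂ)) :
    ((Fin n → ℂ) × (Fin n → ℂ)) →L[ℂ] ℂ :=
  ∑ s, (x.1 s • ((proj s : (Fin n → ℂ) →L[ℂ] ℂ).comp (snd ℂ _ _)) +
        x.2 s • ((proj s : (Fin n → ℂ) →L[ℂ] ℂ).comp (fst ℂ _ _)))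

open ContinuousLinearMap in
theorem hasFDerivAt_genF {n : ℕ} (x : (Fin n → ℂ) × (Fin n → ℂ)) :
    HasFDerivAt (genF (n := n)) (genFderiv x) x := by
  unfold genF genFderiv
  apply HasFDerivAt.fun_sum
  intro s _
  have h1 := (((proj s : (Fin n → ℂ) →L[ℂ] ℂ).comp
      (fst ℂ (Fin n → ℂ) (Fin n → ℂ))).hasFDerivAt (x := x))
  have h2 := (((proj s : (Fin n → ℂ) →L[ℂ] ℂ).comp
      (snd ℂ (Fin n → ℂ) (Fin n → ℂ))).hasFDerivAt (x := x))
  have h12 := h1.fun_mul h2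
  exact h12

theorem pA_genF {n : ℕ} (i : Fin n) (x : (Fin n → ℂ) × (Fin n → ℂ)) :
    pA (genF (n := n)) i x = x.2 i := by
  rw [pA, (hasFDerivAt_genF x).fderiv]
  simp [genFderiv, Pi.single_apply, Finset.sum_ite_eq']

theorem pB_genF {n : ℕ} (j : Fin n) (x : (Fin n → ℂ) × (Fin n → ℂ)) :
    pB (genF (n := n)) j x = x.1 j := by
  rw [pB, (hasFDerivAt_genF x).fderiv]
  simp [genFderiv, Pi.single_apply, Finset.sum_ite_eq']

theorem Vop_genF {n : ℕ} (P : (Fin n → ℂ) × (Fin n → ℂ) → Matrix (Fin n) (Fin n) ℂ)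
    (j : Fin n) (x : (Fin n → ℂ) × (Fin n → ℂ)) :
    Vop P j (genF (n := n)) x = x.2 j + ∑ k, P x j k * x.1 k := by
  simp [Vop, pA_genF, pB_genF]

open ContinuousLinearMap in
/-- If the symmetric matrix `Π` satisfies `B_j = Σ_s Π_{js} A_s` on the open set `U`, then
`V_j F` is holomorphic on `U` and the Prym matrix is recovered as the second Lie derivative
`Π_{ij} = (1/2) V_i V_j F` of the generating function `F = Σ_s A_s B_s`. -/
theorem prym_matrix_second_lie_derivative
    (n : ℕ) (hn : 1 ≤ n)
    (U : Set ((Fin n → ℂ) × (Fin n → ℂ))) (hU : IsOpen U)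
    (P : (Fin n → ℂ) × (Fin n → ℂ) → Matrix (Fin n) (Fin n) ℂ)
    (hsym : ∀ x ∈ U, (P x).IsSymm)
    (hB : ∀ x ∈ U, ∀ j, x.2 j = ∑ s, P x j s * x.1 s) :
    ∀ i j : Fin n,
      DifferentiableOn ℂ (Vop P j (genF (n := n))) U ∧
      ∀ x ∈ U, P x i j = (1 / 2 : ℂ) * Vop P i (Vop P j (genF (n := n))) x := by
  intro i j
  -- `V_j F` equals `2 B_j` on `U`
  have hL : ∀ y ∈ U, Vop P j (genF (n := n)) y = 2 * y.2 j := by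
    intro y hy
    rw [Vop_genF, ← hB y hy j]; ring
  -- the linear model for `y ↦ 2 * y.2 j`
  set L : ((Fin n → ℂ) × (Fin n → ℂ)) →L[ℂ] ℂ :=
    (2 : ℂ) • ((proj j : (Fin n → ℂ) →L[ℂ] ℂ).comp (snd ℂ _ _)) with hLdef
  have hlin : ∀ y, HasFDerivAt (fun y : (Fin n → ℂ) × (Fin n → ℂ) => 2 * y.2 j) L y := by
    intro y
    have := L.hasFDerivAt (x := y)
    convert this using 1
    ext z; simp [hLdef]
  constructor
  · exact DifferentiableOn.congr
      (fun y _ => ((hlin y).differentiableAt).differentiableWithinAt) hL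
  · intro x hx
    have hev : Vop P j (genF (n := n)) =ᶠ[nhds x] fun y => 2 * y.2 j :=
      Filter.eventuallyEq_of_mem (hU.mem_nhds hx) hL
    have hfd : fderiv ℂ (Vop P j (genF (n := n))) x = L :=
      (hev.fderiv_eq).trans (hlin x).fderiv
    have hpA : pA (Vop P j (genF (n := n))) i x = 0 := by
      simp [pA, hfd, hLdef]
    have hpB : ∀ k, pB (Vop P j (genF (n := n))) k x
        = 2 * (if k = j then (1:ℂ) else 0) := by
      intro k
      simp [pB, hfd, hLdef, smul_eq_mul, Pi.single_apply, eq_comm]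
    rw [Vop, hpA]
    simp only [hpB]
    rw [Finset.sum_congr rfl (fun k _ => by split_ifs <;> ring : ∀ k ∈ Finset.univ,
      P x i k * (2 * if k = j then (1:ℂ) else 0) = (if k = j then 2 * P x i k else 0))]
    simp
end
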